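/- If S ⊆ ℝⁿ contains a full-dimensional convex cone K (i.e., a convex cone with nonempty interior), then for every d ∈ ℕ, B_d(S) = ℝ[x]_d, the space of polynomials of total degree at most d. -/

import Mathlib

open MvPolynomial

private lemma eval_aeval_poly {n : ℕ} (g : Fin n → Polynomial ℝ) (t : ℝ)
    (p : MvPolynomial (Fin n) ℝ) :
    Polynomial.eval t (MvPolynomial.aeval g p) = eval (fun i => Polynomial.eval t (g i)) p := by
  induction p using MvPolynomial.induction_on with
  | C a => simp
  | add p q hp hq => simp [hp, hq]
  | mul_X p i hp => simp [hp]

private lemma homogComp_monomial {n : ℕ} (k : ℕ) (s : Fin n →₀ ℕ) (c : ℝ) :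
    homogeneousComponent k (monomial s c) =
      if Finsupp.degree s = k then monomial s c else 0 := by
  ext d
  rw [coeff_homogeneousComponent]
  by_cases h1 : Finsupp.degree d = k <;> by_cases h2 : Finsupp.degree s = k <;>
    by_cases h3 : s = d <;> simp_all [coeff_monomial]

private lemma coeff_ray {n : ℕ} (x : Fin n → ℝ) (p : MvPolynomial (Fin n) ℝ) (k : ℕ) :
    (MvPolynomial.aeval (fun i => Polynomial.C (x i) * Polynomial.X) p).coeff k
      = eval x (homogeneousComponent k p) := by
  induction p using MvPolynomial.induction_on' with
  | add p q hp hq => simp [map_add, hp, hq]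
  | monomial s c =>
      rw [aeval_monomial, homogComp_monomial]
      have : (s.prod fun i e => (Polynomial.C (x i) * Polynomial.X) ^ e)
          = Polynomial.C (s.prod fun i e => x i ^ e) * Polynomial.X ^ (Finsupp.degree s) := by
        rw [Finsupp.prod, Finsupp.prod, Finsupp.degree_apply, map_prod, ← Finset.prod_pow_eq_pow_sum,
          ← Finset.prod_mul_distrib]
        exact Finset.prod_congr rfl fun i _ => by rw [mul_pow, Polynomial.C_pow]
      rw [this]
      simp only [algebraMap_eq, Polynomial.algebraMap_eq, ← mul_assoc, ← Polynomial.C_mul,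
        Polynomial.coeff_C_mul, Polynomial.coeff_X_pow]
      by_cases h : Finsupp.degree s = k
      · simp [h, eval_monomial, Finsupp.prod]
      · rw [if_neg (fun hh => h hh.symm), if_neg h, mul_zero, map_zero]

private lemma eq_zero_of_eval_zero_on_open {n : ℕ} (p : MvPolynomial (Fin n) ℝ)
    (U : Set (Fin n → ℝ)) (hU : IsOpen U) (hne : U.Nonempty)
    (h : ∀ x ∈ U, eval x p = 0) : p = 0 := by
  obtain ⟨a, ha⟩ := hne
  have : ∀ y : Fin n → ℝ, eval y p = eval y (0 : MvPolynomial (Fin n) ℝ) := by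
    intro y
    set c : ℝ → (Fin n → ℝ) := fun t => fun i => a i + Polynomial.eval t
      (Polynomial.C (y i - a i) * Polynomial.X) with hc
    have hcont : Continuous c := by
      apply continuous_pi; intro i; simp only [hc, Polynomial.eval_mul, Polynomial.eval_C,
        Polynomial.eval_X]
      fun_prop
    have hopen : IsOpen (c ⁻¹' U) := hU.preimage hcont
    have h0 : (0:ℝ) ∈ c ⁻¹' U := by
      simp only [Set.mem_preimage, hc]; simpa using ha
    obtain ⟨δ, hδ, hball⟩ := Metric.isOpen_iff.1 hopen 0 h0
    set f : Polynomial ℝ := MvPolynomial.aeval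
      (fun i => Polynomial.C (a i) + Polynomial.C (y i - a i) * Polynomial.X) p with hf
    have hfz : f = 0 := by
      apply Polynomial.eq_zero_of_infinite_isRoot
      apply Set.Infinite.mono (s := Metric.ball (0:ℝ) δ)
      · intro t ht
        have : c t ∈ U := hball ht
        simp only [Set.mem_setOf_eq, Polynomial.IsRoot, hf, eval_aeval_poly]
        simpa [hc] using h _ this
      · rw [Real.ball_eq_Ioo]; exact Set.Ioo_infinite (by linarith)
    have := congrArg (Polynomial.eval (1:ℝ)) hfz
    rw [hf, eval_aeval_poly] at this
    simpa using this
  exact MvPolynomial.funext this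

def Bset (n d : ℕ) (S : Set (Fin n → ℝ)) : Set (MvPolynomial (Fin n) ℝ) :=
  {p | ∃ q : MvPolynomial (Fin n) ℝ, q.totalDegree ≤ 2 * d ∧ ∀ a ∈ S, (eval a p) ^ 2 ≤ eval a q}

theorem Bd_of_full_dim_cone (n : ℕ) (S K : Set (Fin n → ℝ))
    (hKS : K ⊆ S) (hconv : Convex ℝ K)
    (hcone : ∀ c : ℝ, 0 < c → ∀ x ∈ K, c • x ∈ K)
    (hint : (interior K).Nonempty) (d : ℕ) :
    Bset n d S = {p : MvPolynomial (Fin n) ℝ | p.totalDegree ≤ d} := by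
  ext p
  simp only [Bset, Set.mem_setOf_eq]
  constructor
  · rintro ⟨q, hq, hle⟩
    by_contra hd
    push_neg at hd
    have hp0 : p ≠ 0 := by rintro rfl; simp at hd
    set r := p.totalDegree with hr
    have hL : homogeneousComponent r p ≠ 0 := by
      have hsupp : p.support.Nonempty :=
        Finset.nonempty_iff_ne_empty.2 (mt MvPolynomial.support_eq_empty.1 hp0)
      obtain ⟨s, hs, hsd⟩ := Finset.exists_mem_eq_sup p.support hsupp
        (fun s => s.sum fun _ e => e)
      have hsdeg : Finsupp.degree s = r := by
        rw [hr, totalDegree, hsd]; rfl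
      intro hzero
      have hco := coeff_homogeneousComponent (σ := Fin n) (R := ℝ) r s (φ := p)
      rw [hzero, if_pos hsdeg] at hco
      exact (mem_support_iff.1 hs) hco.symm
    have hx : ∃ x ∈ interior K, eval x (homogeneousComponent r p) ≠ 0 := by
      by_contra hcon; push_neg at hcon
      exact hL (eq_zero_of_eval_zero_on_open _ _ isOpen_interior hint hcon)
    obtain ⟨x, hxU, hxL⟩ := hx
    have hxK : x ∈ K := interior_subset hxU
    set g : Fin n → Polynomial ℝ := fun i => Polynomial.C (x i) * Polynomial.X with hg
    set R : Polynomial ℝ := MvPolynomial.aeval g p with hR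
    set Q : Polynomial ℝ := MvPolynomial.aeval g q with hQ
    have hRdle : R.natDegree ≤ r := by
      apply Polynomial.natDegree_le_iff_coeff_eq_zero.2
      intro m hm
      rw [hR, hg, coeff_ray, homogeneousComponent_eq_zero _ _ hm, map_zero]
    have hRcr : R.coeff r = eval x (homogeneousComponent r p) := coeff_ray x p r
    have hRd : R.natDegree = r :=
      le_antisymm hRdle (Polynomial.le_natDegree_of_ne_zero (by rw [hRcr]; exact hxL))
    have hQd : Q.natDegree ≤ 2 * d := by
      apply Polynomial.natDegree_le_iff_coeff_eq_zero.2
      intro m hm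
      rw [hQ, hg, coeff_ray, homogeneousComponent_eq_zero _ _ (lt_of_le_of_lt hq hm), map_zero]
    set F : Polynomial ℝ := Q - R ^ 2 with hF
    have hR2d : (R ^ 2).natDegree = 2 * r := by
      rw [Polynomial.natDegree_pow, hRd]
    have hlt : Q.natDegree < (R ^ 2).natDegree := by rw [hR2d]; omega
    have hFd : F.natDegree = 2 * r := by
      rw [hF, Polynomial.natDegree_sub_eq_right_of_natDegree_lt hlt, hR2d]
    have hFlc : F.leadingCoeff < 0 := by
      have hQ0 : Q.coeff (2 * r) = 0 :=
        Polynomial.coeff_eq_zero_of_natDegree_lt (by omega)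
      have hR20 : (R ^ 2).coeff (2 * r) = (R.coeff r) ^ 2 := by
        conv_lhs => rw [← hR2d, ← Polynomial.leadingCoeff]
        rw [Polynomial.leadingCoeff_pow, Polynomial.leadingCoeff, hRd]
      have hcoef : F.coeff (2 * r) = - (R.coeff r) ^ 2 := by
        rw [hF, Polynomial.coeff_sub, hQ0, hR20]; ring
      rw [Polynomial.leadingCoeff, hFd, hcoef]
      have hne : R.coeff r ≠ 0 := by rw [hRcr]; exact hxL
      have := pow_two_pos_of_ne_zero hne
      linarith
    have hdeg : 0 < F.degree := by
      rw [Polynomial.natDegree_pos_iff_degree_pos.symm, hFd]; omega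
    have htend := Polynomial.tendsto_atBot_of_leadingCoeff_nonpos F hdeg hFlc.le
    have hev : ∀ᶠ t in Filter.atTop, Polynomial.eval t F < 0 :=
      htend.eventually (Filter.eventually_lt_atBot 0)
    obtain ⟨t, htF, ht0⟩ := (hev.and (Filter.eventually_gt_atTop 0)).exists
    have htx : t • x ∈ S := hKS (hcone t ht0 x hxK)
    have hineq := hle (t • x) htx
    have harg : (fun i => Polynomial.eval t (g i)) = t • x := by
      funext i
      simp only [hg, Polynomial.eval_mul, Polynomial.eval_C, Polynomial.eval_X,
        Pi.smul_apply, smul_eq_mul, mul_comm]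
    have hRe : Polynomial.eval t R = eval (t • x) p := by
      rw [hR, eval_aeval_poly, harg]
    have hQe : Polynomial.eval t Q = eval (t • x) q := by
      rw [hQ, eval_aeval_poly, harg]
    rw [← hRe, ← hQe] at hineq
    have : 0 ≤ Polynomial.eval t F := by
      rw [hF]; simp only [Polynomial.eval_sub, Polynomial.eval_pow]; linarith
    linarith
  · intro hp
    refine ⟨p ^ 2, ?_, fun a _ => by rw [map_pow]⟩
    calc (p ^ 2).totalDegree ≤ 2 * p.totalDegree := totalDegree_pow p 2
    _ ≤ 2 * d := by omega
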